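/- Let σ > 0 and let A be a real random variable with A ~ N(-σ²/2, σ²) (Gaussian with mean -σ²/2 and variance σ²). Then E[min(1, exp(A))] = 2·Φ(-σ/2), where Φ is the cumulative distribution function of the standard normal distribution. -/

import Mathlib

open MeasureTheory ProbabilityTheory Real
open scoped NNReal ENNReal

lemma gaussian_pdf_tilt (σ : ℝ) (hσ : 0 < σ) (x : ℝ) :
    gaussianPDFReal (-σ ^ 2 / 2) (Real.toNNReal (σ ^ 2)) x * Real.exp x
      = gaussianPDFReal (σ ^ 2 / 2) (Real.toNNReal (σ ^ 2)) x := by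
  have hvc : ((Real.toNNReal (σ ^ 2) : ℝ≥0) : ℝ) = σ ^ 2 :=
    Real.coe_toNNReal _ (sq_nonneg σ)
  have hσ2 : (σ : ℝ) ^ 2 ≠ 0 := by positivity
  simp only [gaussianPDFReal, hvc]
  rw [mul_assoc, ← Real.exp_add]
  congr 1
  field_simp
  ring

/-- For `σ > 0` and a real random variable `A ~ N(-σ²/2, σ²)`,
`E[min(1, exp A)] = 2 Φ(-σ/2)` where `Φ` is the standard normal CDF. -/
theorem expectation_min_one_exp_gaussian
    {Ω : Type*} [MeasurableSpace Ω] (P : Measure Ω) [IsProbabilityMeasure P]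
    (σ : ℝ) (hσ : 0 < σ) (A : Ω → ℝ)
    (hA : Measure.map A P = gaussianReal (-σ ^ 2 / 2) (Real.toNNReal (σ ^ 2))) :
    ∫ ω, min 1 (Real.exp (A ω)) ∂P = 2 * cdf (gaussianReal 0 1) (-σ / 2) := by
  set v : ℝ≥0 := Real.toNNReal (σ ^ 2) with hv_def
  have hσ2 : (0:ℝ) < σ ^ 2 := by positivity
  have hvc : ((v : ℝ≥0) : ℝ) = σ ^ 2 := Real.coe_toNNReal _ hσ2.le
  have hv0 : v ≠ 0 := by
    intro h
    rw [hv_def, Real.toNNReal_eq_zero] at h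
    linarith
  set μ₁ : Measure ℝ := gaussianReal (-σ ^ 2 / 2) v with hμ1_def
  set μ₂ : Measure ℝ := gaussianReal (σ ^ 2 / 2) v with hμ2_def
  set g : Measure ℝ := gaussianReal 0 1 with hg_def
  have hAm : AEMeasurable A P := by
    by_contra h
    rw [Measure.map_of_not_aemeasurable h] at hA
    have h1 := congrArg (fun μ : Measure ℝ => μ Set.univ) hA
    simpa using h1
  set f : ℝ → ℝ := fun x => min 1 (Real.exp x) with hf_def
  have hf_cont : Continuous f := continuous_const.min Real.continuous_exp
  have h1 : ∫ ω, min 1 (Real.exp (A ω)) ∂P = ∫ x, f x ∂μ₁ := by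
    rw [← hA, integral_map hAm hf_cont.aestronglyMeasurable]
  have hf_int : Integrable f μ₁ := by
    refine Integrable.mono' (integrable_const (1:ℝ)) hf_cont.aestronglyMeasurable ?_
    filter_upwards with x
    rw [Real.norm_eq_abs, abs_of_nonneg (le_min zero_le_one (Real.exp_pos x).le)]
    exact min_le_left _ _
  have hsplit : ∫ x, f x ∂μ₁
      = ∫ x in Set.Iic 0, f x ∂μ₁ + ∫ x in Set.Ioi 0, f x ∂μ₁ := by
    rw [← integral_add_compl measurableSet_Iic hf_int, Set.compl_Iic]
  have hIic : ∫ x in Set.Iic 0, f x ∂μ₁ = ∫ x in Set.Iic 0, Real.exp x ∂μ₁ := by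
    refine setIntegral_congr_fun measurableSet_Iic fun x hx => ?_
    exact min_eq_right (Real.exp_le_one_iff.mpr hx)
  have hIoi : ∫ x in Set.Ioi 0, f x ∂μ₁ = (μ₁ (Set.Ioi 0)).toReal := by
    have : ∫ x in Set.Ioi 0, f x ∂μ₁ = ∫ _x in Set.Ioi 0, (1:ℝ) ∂μ₁ := by
      refine setIntegral_congr_fun measurableSet_Ioi fun x hx => ?_
      exact min_eq_left (Real.one_le_exp hx.le)
    rw [this, setIntegral_const]
    simp
    rfl
  have hexp : ∫ x in Set.Iic 0, Real.exp x ∂μ₁ = (μ₂ (Set.Iic 0)).toReal := by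
    rw [hμ1_def, gaussianReal_of_var_ne_zero _ hv0,
      restrict_withDensity measurableSet_Iic]
    have hpdf : gaussianPDF (-σ ^ 2 / 2) v
        = fun x => ((Real.toNNReal (gaussianPDFReal (-σ ^ 2 / 2) v x) : ℝ≥0) : ℝ≥0∞) := rfl
    rw [hpdf, integral_withDensity_eq_integral_smul
      ((measurable_gaussianPDFReal _ _).real_toNNReal) _]
    rw [hμ2_def, gaussianReal_apply_eq_integral _ hv0,
      ENNReal.toReal_ofReal
        (setIntegral_nonneg measurableSet_Iic fun x _ => gaussianPDFReal_nonneg _ _ x)]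
    refine setIntegral_congr_fun measurableSet_Iic fun x _ => ?_
    rw [NNReal.smul_def, Real.coe_toNNReal _ (gaussianPDFReal_nonneg _ _ x)]
    exact gaussian_pdf_tilt σ hσ x
  have hveq : (NNReal.mk (σ ^ 2) (sq_nonneg σ)) * 1 = v := by
    apply NNReal.coe_injective
    simp [hvc]
  have hmap2 : μ₂ = Measure.map (· + σ ^ 2 / 2) (Measure.map (σ * ·) g) := by
    rw [hg_def, gaussianReal_map_const_mul σ, hveq, mul_zero,
      gaussianReal_map_add_const, zero_add, hμ2_def]
  have hμ2Iic : μ₂ (Set.Iic 0) = g (Set.Iic (-σ / 2)) := by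
    rw [hmap2, Measure.map_apply (measurable_add_const _) measurableSet_Iic,
      Measure.map_apply (measurable_const_mul σ) (by measurability)]
    congr 1
    ext x
    simp only [Set.mem_preimage, Set.mem_Iic]
    constructor <;> intro h <;> nlinarith
  have hmap1 : μ₁ = Measure.map (· + -(σ ^ 2 / 2)) (Measure.map (σ * ·) g) := by
    rw [hg_def, gaussianReal_map_const_mul σ, hveq, mul_zero,
      gaussianReal_map_add_const, zero_add, hμ1_def, neg_div]
  have hμ1Ioi : μ₁ (Set.Ioi 0) = g (Set.Ioi (σ / 2)) := by
    rw [hmap1, Measure.map_apply (measurable_add_const _) measurableSet_Ioi,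
      Measure.map_apply (measurable_const_mul σ) (by measurability)]
    congr 1
    ext x
    simp only [Set.mem_preimage, Set.mem_Ioi]
    constructor <;> intro h <;> nlinarith
  have hneg : Measure.map (fun x : ℝ => -1 * x) g = g := by
    rw [hg_def, gaussianReal_map_const_mul (-1 : ℝ)]
    norm_num
  have hsym : g (Set.Ioi (σ / 2)) = g (Set.Iic (-σ / 2)) := by
    have hsing : g {-σ / 2} = 0 :=
      (gaussianReal_absolutelyContinuous 0 one_ne_zero) (measure_singleton _)
    calc g (Set.Ioi (σ / 2)) = (Measure.map (fun x : ℝ => -1 * x) g) (Set.Ioi (σ / 2)) := by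
          rw [hneg]
      _ = g ((fun x : ℝ => -1 * x) ⁻¹' Set.Ioi (σ / 2)) :=
          Measure.map_apply (measurable_const_mul _) measurableSet_Ioi
      _ = g (Set.Iio (-σ / 2)) := by
          congr 1
          ext x
          simp only [Set.mem_preimage, Set.mem_Ioi, Set.mem_Iio]
          constructor <;> intro h <;> linarith
      _ = g (Set.Iic (-σ / 2)) := measure_congr (Iio_ae_eq_Iic' hsing)
  have hcdf : cdf g (-σ / 2) = (g (Set.Iic (-σ / 2))).toReal := cdf_eq_real _ _
  rw [h1, hsplit, hIic, hexp, hIoi, hμ2Iic, hμ1Ioi, hsym, hcdf]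
  ring
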